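/- arXiv:2311.02472 — 2 statements merged into one kernel-verified Lean document; each statement's English description precedes it below -/
import Mathlib

section
/- Let $H$ be a real inner product space, $0 < q < 1$, $2 < p$, $\lambda > 0$, and let $M, N : H \to \mathbb{R}$ with $M(w), N(w) > 0$ for a fixed $w \neq 0$. Define $\Phi(t) = \frac{t^2}{2}\|w\|^2 - \lambda \frac{t^{1-q}}{1-q} M(w) - \frac{t^p}{p} N(w)$ for $t > 0$. If $\lambda M(w) < \max_{t>0}\left(t^{1+q}\|w\|^2 - t^{p-1+q}N(w)\right)$, then $\Phi'$ has exactly two zeros $0 < t_* < t^*$, with $\Phi''(t_*) > 0$ and $\Phi''(t^*) < 0$; moreover $\Phi$ is decreasing on $(0,t_*)$ and increasing on $(t_*, t^*)$. -/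
open Real Set

theorem stmt_2 {H : Type*} [NormedAddCommGroup H] [InnerProductSpace ℝ H]
    (p q lam : ℝ) (hq0 : 0 < q) (hq1 : q < 1) (hp : 2 < p) (hlam : 0 < lam)
    (M N : H → ℝ) (w : H) (hw : w ≠ 0) (hM : 0 < M w) (hN : 0 < N w)
    (Φ : ℝ → ℝ)
    (hΦ : ∀ t : ℝ, Φ t = t ^ (2 : ℝ) / 2 * ‖w‖ ^ 2
        - lam * (t ^ (1 - q) / (1 - q)) * M w - t ^ p / p * N w)
    (hmax : ∃ tmax : ℝ, 0 < tmax ∧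
        (∀ t : ℝ, 0 < t →
          t ^ (1 + q) * ‖w‖ ^ 2 - t ^ (p - 1 + q) * N w ≤
            tmax ^ (1 + q) * ‖w‖ ^ 2 - tmax ^ (p - 1 + q) * N w) ∧
        lam * M w < tmax ^ (1 + q) * ‖w‖ ^ 2 - tmax ^ (p - 1 + q) * N w) :
    ∃ tstar tsstar : ℝ, 0 < tstar ∧ tstar < tsstar ∧
      deriv Φ tstar = 0 ∧ deriv Φ tsstar = 0 ∧
      (∀ t : ℝ, 0 < t → deriv Φ t = 0 → t = tstar ∨ t = tsstar) ∧
      0 < deriv (deriv Φ) tstar ∧ deriv (deriv Φ) tsstar < 0 ∧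
      StrictAntiOn Φ (Ioo 0 tstar) ∧ StrictMonoOn Φ (Ioo tstar tsstar) := by
  obtain ⟨tmax, htmax0, htmaxmax, htmaxlt⟩ := hmax
  set a : ℝ := ‖w‖ ^ 2 with ha_def
  set b : ℝ := N w with hb_def
  set c : ℝ := lam * M w with hc_def
  have ha : 0 < a := by
    have hw' : 0 < ‖w‖ := norm_pos_iff.mpr hw
    positivity
  have hb : 0 < b := hN
  have hc : 0 < c := mul_pos hlam hM
  have h1q : (0:ℝ) < 1 - q := by linarith
  have hq1' : (0:ℝ) < 1 + q := by linarith
  have hpq : (0:ℝ) < p - 1 + q := by linarith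
  have hp2 : (0:ℝ) < p - 2 := by linarith
  have hp0 : (0:ℝ) < p := by linarith
  set g : ℝ → ℝ := fun t => t ^ (1 + q) * a - t ^ (p - 1 + q) * b with hg_def
  -- derivative of g
  have hg' : ∀ t : ℝ, 0 < t →
      HasDerivAt g (t ^ q * ((1 + q) * a - (p - 1 + q) * t ^ (p - 2) * b)) t := by
    intro t ht
    have h1 : HasDerivAt (fun x : ℝ => x ^ (1 + q) * a) ((1 + q) * t ^ (1 + q - 1) * a) t :=
      (Real.hasDerivAt_rpow_const (Or.inl ht.ne')).mul_const a
    have h2 : HasDerivAt (fun x : ℝ => x ^ (p - 1 + q) * b)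
        ((p - 1 + q) * t ^ (p - 1 + q - 1) * b) t :=
      (Real.hasDerivAt_rpow_const (Or.inl ht.ne')).mul_const b
    have h3 := h1.sub h2
    refine h3.congr_deriv ?_
    have e1 : 1 + q - 1 = q := by ring
    have e2 : p - 1 + q - 1 = (p - 2) + q := by ring
    rw [e1, e2, Real.rpow_add ht]
    ring
  -- the critical point of g
  set t0 : ℝ := ((1 + q) * a / ((p - 1 + q) * b)) ^ (1 / (p - 2)) with ht0_def
  have hX : 0 < (1 + q) * a / ((p - 1 + q) * b) := by positivity
  have ht0 : 0 < t0 := Real.rpow_pos_of_pos hX _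
  have ht0p : t0 ^ (p - 2) = (1 + q) * a / ((p - 1 + q) * b) := by
    rw [ht0_def, ← Real.rpow_mul hX.le, one_div, inv_mul_cancel₀ hp2.ne', Real.rpow_one]
  have hfac : ∀ t : ℝ, (1 + q) * a - (p - 1 + q) * t ^ (p - 2) * b
      = (p - 1 + q) * b * (t0 ^ (p - 2) - t ^ (p - 2)) := by
    intro t
    rw [ht0p]
    field_simp
  have hg_mono : StrictMonoOn g (Ioc 0 t0) := by
    apply strictMonoOn_of_deriv_pos (convex_Ioc 0 t0)
    · exact fun x hx => ((hg' x hx.1).continuousAt).continuousWithinAt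
    · intro x hx
      rw [interior_Ioc] at hx
      rw [(hg' x hx.1).deriv, hfac x]
      have hlt : x ^ (p - 2) < t0 ^ (p - 2) := Real.rpow_lt_rpow hx.1.le hx.2 hp2
      have h1 : 0 < x ^ q := Real.rpow_pos_of_pos hx.1 q
      have h2 : 0 < (p - 1 + q) * b * (t0 ^ (p - 2) - x ^ (p - 2)) := by
        apply mul_pos (by positivity)
        linarith
      positivity
  have hg_anti : StrictAntiOn g (Ici t0) := by
    apply strictAntiOn_of_deriv_neg (convex_Ici t0)
    · exact fun x hx => ((hg' x (lt_of_lt_of_le ht0 hx)).continuousAt).continuousWithinAt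
    · intro x hx
      rw [interior_Ici] at hx
      have hx0 : 0 < x := ht0.trans hx
      rw [(hg' x hx0).deriv, hfac x]
      have hlt : t0 ^ (p - 2) < x ^ (p - 2) := Real.rpow_lt_rpow ht0.le hx hp2
      have h1 : 0 < x ^ q := Real.rpow_pos_of_pos hx0 q
      have h2 : (p - 1 + q) * b * (t0 ^ (p - 2) - x ^ (p - 2)) < 0 := by
        apply mul_neg_of_pos_of_neg (by positivity)
        linarith
      exact mul_neg_of_pos_of_neg h1 h2
  -- t0 is the maximum point
  have hg_t0_max : ∀ t : ℝ, 0 < t → g t ≤ g t0 := by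
    intro t ht
    rcases le_or_gt t t0 with h | h
    · rcases eq_or_lt_of_le h with rfl | h'
      · exact le_refl _
      · exact (hg_mono ⟨ht, h⟩ ⟨ht0, le_refl _⟩ h').le
    · exact (hg_anti (self_mem_Ici) h.le h).le
  have hct0 : c < g t0 := lt_of_lt_of_le htmaxlt (hg_t0_max tmax htmax0)
  -- existence of tstar
  set s1 : ℝ := (c / a) ^ (1 / (1 + q)) with hs1_def
  have hs1 : 0 < s1 := Real.rpow_pos_of_pos (by positivity) _
  have hs1p : s1 ^ (1 + q) = c / a := by
    rw [hs1_def, ← Real.rpow_mul (by positivity : (0:ℝ) ≤ c / a), one_div,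
      inv_mul_cancel₀ hq1'.ne', Real.rpow_one]
  set t1 : ℝ := min (t0 / 2) (s1 / 2) with ht1_def
  have ht1 : 0 < t1 := lt_min (by linarith) (by linarith)
  have ht1t0 : t1 < t0 := lt_of_le_of_lt (min_le_left _ _) (by linarith)
  have ht1s1 : t1 < s1 := lt_of_le_of_lt (min_le_right _ _) (by linarith)
  have hgt1 : g t1 < c := by
    have h1 : t1 ^ (1 + q) < s1 ^ (1 + q) := Real.rpow_lt_rpow ht1.le ht1s1 hq1'
    have h2 : t1 ^ (1 + q) * a < c := by
      rw [hs1p] at h1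
      calc t1 ^ (1 + q) * a < (c / a) * a := by
              exact mul_lt_mul_of_pos_right h1 ha
        _ = c := div_mul_cancel₀ c ha.ne'
    have h3 : 0 < t1 ^ (p - 1 + q) * b := by
      have := Real.rpow_pos_of_pos ht1 (p - 1 + q); positivity
    simp only [hg_def]
    linarith
  have hgcont : ∀ x : ℝ, 0 < x → ContinuousAt g x := fun x hx => (hg' x hx).continuousAt
  obtain ⟨tstar, htstar_mem, hgtstar⟩ :
      ∃ tstar ∈ Ioo t1 t0, g tstar = c := by
    have hsub := intermediate_value_Ioo ht1t0.le
      (fun x hx => (hgcont x (lt_of_lt_of_le ht1 hx.1)).continuousWithinAt)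
    have hmem : c ∈ Ioo (g t1) (g t0) := ⟨hgt1, hct0⟩
    obtain ⟨ts, hts, hgts⟩ := hsub hmem
    exact ⟨ts, hts, hgts⟩
  have htstar0 : 0 < tstar := ht1.trans htstar_mem.1
  have htstart0 : tstar < t0 := htstar_mem.2
  -- existence of tsstar
  set r : ℝ := (a / b) ^ (1 / (p - 2)) with hr_def
  have hr0 : (0:ℝ) ≤ r := Real.rpow_nonneg (by positivity) _
  have hrp : r ^ (p - 2) = a / b := by
    rw [hr_def, ← Real.rpow_mul (by positivity : (0:ℝ) ≤ a / b), one_div,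
      inv_mul_cancel₀ hp2.ne', Real.rpow_one]
  set T : ℝ := max (2 * t0) (r + 1) with hT_def
  have hTt0 : t0 < T := lt_of_lt_of_le (by linarith) (le_max_left _ _)
  have hT0 : 0 < T := ht0.trans hTt0
  have hTr : r < T := lt_of_lt_of_le (by linarith) (le_max_right _ _)
  have hgT : g T < c := by
    have h1 : r ^ (p - 2) < T ^ (p - 2) := Real.rpow_lt_rpow hr0 hTr hp2
    rw [hrp] at h1
    have h2 : a < T ^ (p - 2) * b := by
      have := (div_lt_iff₀ hb).mp h1
      linarith
    have h3 : T ^ (p - 1 + q) = T ^ (1 + q) * T ^ (p - 2) := by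
      have e : p - 1 + q = (1 + q) + (p - 2) := by ring
      rw [e, Real.rpow_add hT0]
    have h4 : 0 < T ^ (1 + q) := Real.rpow_pos_of_pos hT0 _
    have h5 : g T = T ^ (1 + q) * (a - T ^ (p - 2) * b) := by
      simp only [hg_def]; rw [h3]; ring
    have h6 : g T < 0 := by
      rw [h5]
      exact mul_neg_of_pos_of_neg h4 (by linarith)
    linarith
  obtain ⟨tsstar, htss_mem, hgtsstar⟩ :
      ∃ tss ∈ Ioo t0 T, g tss = c := by
    have hsub := intermediate_value_Ioo' hTt0.le
      (fun x hx => (hgcont x (lt_of_lt_of_le ht0 hx.1)).continuousWithinAt)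
    have hmem : c ∈ Ioo (g T) (g t0) := ⟨hgT, hct0⟩
    obtain ⟨ts, hts, hgts⟩ := hsub hmem
    exact ⟨ts, hts, hgts⟩
  have htss0 : 0 < tsstar := ht0.trans htss_mem.1
  have ht0tss : t0 < tsstar := htss_mem.1
  have htstss : tstar < tsstar := htstart0.trans ht0tss
  -- derivative of Φ
  have hΦeq : Φ = fun t : ℝ => t ^ (2:ℝ) / 2 * a - lam * (t ^ (1 - q) / (1 - q)) * M w
      - t ^ p / p * b := funext hΦ
  set F : ℝ → ℝ := fun t => t * a - c * t ^ (-q) - t ^ (p - 1) * b with hF_def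
  have hΦ' : ∀ t : ℝ, 0 < t → HasDerivAt Φ (F t) t := by
    intro t ht
    rw [hΦeq]
    have h1 : HasDerivAt (fun x : ℝ => x ^ (2:ℝ) / 2 * a) ((2:ℝ) * t ^ ((2:ℝ) - 1) / 2 * a) t :=
      ((Real.hasDerivAt_rpow_const (Or.inl ht.ne')).div_const 2).mul_const a
    have h2 : HasDerivAt (fun x : ℝ => lam * (x ^ (1 - q) / (1 - q)) * M w)
        (lam * ((1 - q) * t ^ (1 - q - 1) / (1 - q)) * M w) t :=
      (((Real.hasDerivAt_rpow_const (Or.inl ht.ne')).div_const (1 - q)).const_mul lam).mul_const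
        (M w)
    have h3 : HasDerivAt (fun x : ℝ => x ^ p / p * b) (p * t ^ (p - 1) / p * b) t :=
      ((Real.hasDerivAt_rpow_const (Or.inl ht.ne')).div_const p).mul_const b
    have h4 := (h1.sub h2).sub h3
    refine h4.congr_deriv ?_
    have e1 : (2:ℝ) - 1 = 1 := by norm_num
    have e2 : 1 - q - 1 = -q := by ring
    rw [hF_def, e1, e2, Real.rpow_one]
    field_simp
    ring
  have hderivΦ : ∀ t : ℝ, 0 < t → deriv Φ t = F t := fun t ht => (hΦ' t ht).deriv
  -- identity F t = t^(-q) * (g t - c)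
  have hFg : ∀ t : ℝ, 0 < t → F t = t ^ (-q) * (g t - c) := by
    intro t ht
    have e1 : t ^ (-q) * t ^ (1 + q) = t := by
      have e : -q + (1 + q) = 1 := by ring
      rw [← Real.rpow_add ht, e, Real.rpow_one]
    have e2 : t ^ (-q) * t ^ (p - 1 + q) = t ^ (p - 1) := by
      have e : -q + (p - 1 + q) = p - 1 := by ring
      rw [← Real.rpow_add ht, e]
    simp only [hF_def, hg_def]
    linear_combination b * e2 - a * e1
  have hzero : ∀ t : ℝ, 0 < t → (deriv Φ t = 0 ↔ g t = c) := by
    intro t ht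
    rw [hderivΦ t ht, hFg t ht]
    have h1 : (0:ℝ) < t ^ (-q) := Real.rpow_pos_of_pos ht _
    constructor
    · intro h
      rcases mul_eq_zero.mp h with h' | h'
      · exact absurd h' h1.ne'
      · linarith [sub_eq_zero.mp h']
    · intro h
      rw [h, sub_self, mul_zero]
  have hdtstar : deriv Φ tstar = 0 := (hzero tstar htstar0).mpr hgtstar
  have hdtsstar : deriv Φ tsstar = 0 := (hzero tsstar htss0).mpr hgtsstar
  -- uniqueness
  have huniq : ∀ t : ℝ, 0 < t → deriv Φ t = 0 → t = tstar ∨ t = tsstar := by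
    intro t ht hdt
    have hgt : g t = c := (hzero t ht).mp hdt
    rcases lt_trichotomy t t0 with h | h | h
    · left
      exact hg_mono.injOn ⟨ht, h.le⟩ ⟨htstar0, htstart0.le⟩ (hgt.trans hgtstar.symm)
    · exfalso
      rw [h] at hgt
      linarith
    · right
      exact hg_anti.injOn (mem_Ici.mpr h.le) (mem_Ici.mpr ht0tss.le) (hgt.trans hgtsstar.symm)
  -- second derivative
  have hderiv2 : ∀ t : ℝ, 0 < t →
      deriv (deriv Φ) t = a + c * q * t ^ (-q - 1) - (p - 1) * t ^ (p - 2) * b := by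
    intro t ht
    have hEq : deriv Φ =ᶠ[nhds t] F :=
      Filter.eventuallyEq_of_mem (Ioi_mem_nhds ht) (fun x hx => hderivΦ x hx)
    rw [hEq.deriv_eq]
    have h1 : HasDerivAt (fun x : ℝ => x * a) (1 * a) t := (hasDerivAt_id t).mul_const a
    have h2 : HasDerivAt (fun x : ℝ => c * x ^ (-q)) (c * (-q * t ^ (-q - 1))) t :=
      (Real.hasDerivAt_rpow_const (Or.inl ht.ne')).const_mul c
    have h3 : HasDerivAt (fun x : ℝ => x ^ (p - 1) * b) ((p - 1) * t ^ (p - 1 - 1) * b) t :=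
      (Real.hasDerivAt_rpow_const (Or.inl ht.ne')).mul_const b
    have h4 := (h1.sub h2).sub h3
    rw [(show HasDerivAt F _ t from h4).deriv]
    have e : p - 1 - 1 = p - 2 := by ring
    rw [e]
    ring
  have hsecond : ∀ t : ℝ, 0 < t → g t = c →
      deriv (deriv Φ) t = (1 + q) * a - (p - 1 + q) * t ^ (p - 2) * b := by
    intro t ht hgt
    rw [hderiv2 t ht]
    have e1 : t ^ (-q - 1) * t ^ (1 + q) = 1 := by
      have e : -q - 1 + (1 + q) = 0 := by ring
      rw [← Real.rpow_add ht, e, Real.rpow_zero]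
    have e2 : t ^ (-q - 1) * t ^ (p - 1 + q) = t ^ (p - 2) := by
      have e : -q - 1 + (p - 1 + q) = p - 2 := by ring
      rw [← Real.rpow_add ht, e]
    simp only [hg_def] at hgt
    linear_combination (-(q * t ^ (-q - 1))) * hgt + (q * a) * e1 - (q * b) * e2
  have hsec1 : 0 < deriv (deriv Φ) tstar := by
    rw [hsecond tstar htstar0 hgtstar, hfac tstar]
    have hlt : tstar ^ (p - 2) < t0 ^ (p - 2) := Real.rpow_lt_rpow htstar0.le htstart0 hp2
    apply mul_pos (by positivity)
    linarith
  have hsec2 : deriv (deriv Φ) tsstar < 0 := by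
    rw [hsecond tsstar htss0 hgtsstar, hfac tsstar]
    have hlt : t0 ^ (p - 2) < tsstar ^ (p - 2) := Real.rpow_lt_rpow ht0.le ht0tss hp2
    apply mul_neg_of_pos_of_neg (by positivity)
    linarith
  -- monotonicity
  have hanti : StrictAntiOn Φ (Ioo 0 tstar) := by
    apply strictAntiOn_of_deriv_neg (convex_Ioo 0 tstar)
    · exact fun x hx => (hΦ' x hx.1).continuousAt.continuousWithinAt
    · intro x hx
      rw [interior_Ioo] at hx
      rw [hderivΦ x hx.1, hFg x hx.1]
      have h1 : (0:ℝ) < x ^ (-q) := Real.rpow_pos_of_pos hx.1 _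
      have h2 : g x < c := by
        have := hg_mono ⟨hx.1, (hx.2.trans htstart0).le⟩ ⟨htstar0, htstart0.le⟩ hx.2
        linarith [hgtstar ▸ this]
      exact mul_neg_of_pos_of_neg h1 (by linarith)
  have hmono : StrictMonoOn Φ (Ioo tstar tsstar) := by
    apply strictMonoOn_of_deriv_pos (convex_Ioo tstar tsstar)
    · exact fun x hx => (hΦ' x (htstar0.trans hx.1)).continuousAt.continuousWithinAt
    · intro x hx
      rw [interior_Ioo] at hx
      have hx0 : 0 < x := htstar0.trans hx.1
      rw [hderivΦ x hx0, hFg x hx0]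
      have h1 : (0:ℝ) < x ^ (-q) := Real.rpow_pos_of_pos hx0 _
      have h2 : c < g x := by
        rcases le_or_gt x t0 with h | h
        · have := hg_mono ⟨htstar0, htstart0.le⟩ ⟨hx0, h⟩ hx.1
          linarith [hgtstar ▸ this]
        · have := hg_anti (mem_Ici.mpr h.le) (mem_Ici.mpr ht0tss.le) hx.2
          linarith [hgtsstar ▸ this]
      exact mul_pos h1 (by linarith)
  exact ⟨tstar, tsstar, htstar0, htstss, hdtstar, hdtsstar, huniq, hsec1, hsec2, hanti, hmono⟩
end

section
/- Let $0 < q < 1 < 2 < p$ and $a, b, c > 0$. Suppose $t > 0$ satisfies both $a t - b t^{-q} - c t^{p-1} = 0$ (so $t$ is a critical point of $\Phi(s)=\frac{a s^2}{2}-\frac{b s^{1-q}}{1-q}-\frac{c s^p}{p}$) and $a + qb t^{-q-1} - (p-1)c t^{p-2} = 0$ (so $\Phi''(t)=0$). Then no such $t$ exists, i.e., the two equations are incompatible whenever $b < \frac{p-2}{p-1+q}\left(\frac{1+q}{p-1+q}\right)^{(1+q)/(p-2)} \frac{a^{(p-1+q)/(p-2)}}{c^{(1+q)/(p-2)}}$.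 -/
open Real

theorem stmt_3 (p q a b c t : ℝ) (hq0 : 0 < q) (hq1 : q < 1) (hp : 2 < p)
    (ha : 0 < a) (hb : 0 < b) (hc : 0 < c) (ht : 0 < t)
    (hb' : b < (p - 2) / (p - 1 + q) * ((1 + q) / (p - 1 + q)) ^ ((1 + q) / (p - 2)) *
        a ^ ((p - 1 + q) / (p - 2)) / c ^ ((1 + q) / (p - 2)))
    (h1 : a * t - b * t ^ (-q) - c * t ^ (p - 1) = 0)
    (h2 : a + q * b * t ^ (-q - 1) - (p - 1) * c * t ^ (p - 2) = 0) :
    False := by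
  have hp2 : (0:ℝ) < p - 2 := by linarith
  have h1q : (0:ℝ) < 1 + q := by linarith
  have hpq : (0:ℝ) < p - 1 + q := by linarith
  set K : ℝ := (p - 1 + q) / (1 + q) with hK
  have hKpos : 0 < K := div_pos hpq h1q
  set m : ℝ := (1 + q) / (p - 2) with hm
  set E : ℝ := (p - 1 + q) / (p - 2) with hE
  have hEm : E = m + 1 := by rw [hE, hm, div_add_one hp2.ne']; ring
  -- basic rpow identities
  have ht2 : t ^ (-q - 1) * t = t ^ (-q) := by
    rw [← rpow_add_one ht.ne' (-q - 1)]; ring_nf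
  have ht3 : t ^ (p - 2) * t = t ^ (p - 1) := by
    rw [← rpow_add_one ht.ne' (p - 2)]; ring_nf
  have h2t : a * t + q * b * (t ^ (-q - 1) * t) - (p - 1) * c * (t ^ (p - 2) * t) = 0 := by
    linear_combination t * h2
  rw [ht2, ht3] at h2t
  have key1 : (1 + q) * (b * t ^ (-q)) = (p - 2) * (c * t ^ (p - 1)) := by
    linear_combination h2t - h1
  have key2 : (1 + q) * (a * t) = (p - 1 + q) * (c * t ^ (p - 1)) := by
    linear_combination (1 + q) * h1 + key1
  -- a = K * c * t^(p-2)
  have ha_eq : a = K * c * t ^ (p - 2) := by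
    have h := key2
    rw [← ht3] at h
    have : ((1 + q) * a) * t = ((p - 1 + q) * (c * t ^ (p - 2))) * t := by
      linear_combination h
    have h' := mul_right_cancel₀ ht.ne' this
    rw [hK]; field_simp; linarith [h']
  -- b = (p-2)/(1+q) * c * t^(p-1+q)
  have htq : t ^ (-q) * t ^ q = 1 := by
    rw [← rpow_add ht]; simp
  have htpq : t ^ (p - 1) * t ^ q = t ^ (p - 1 + q) := by
    rw [← rpow_add ht]
  have hb_eq : (1 + q) * b = (p - 2) * (c * t ^ (p - 1 + q)) := by
    have : ((1 + q) * (b * t ^ (-q))) * t ^ q = ((p - 2) * (c * t ^ (p - 1))) * t ^ q := by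
      rw [key1]
    calc (1 + q) * b = ((1 + q) * (b * t ^ (-q))) * t ^ q := by
          rw [mul_assoc (1+q), mul_assoc b, htq, mul_one]
      _ = ((p - 2) * (c * t ^ (p - 1))) * t ^ q := this
      _ = (p - 2) * (c * t ^ (p - 1 + q)) := by
          rw [mul_assoc, mul_assoc c, htpq]
  -- compute a^E
  have haE : a ^ E = K ^ m * K * (c ^ m * c) * t ^ (p - 1 + q) := by
    rw [ha_eq]
    rw [mul_rpow (by positivity) (rpow_nonneg ht.le _),
        mul_rpow hKpos.le hc.le, ← rpow_mul ht.le]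
    have h1' : (p - 2) * E = p - 1 + q := by
      rw [hE]; field_simp
    rw [h1', hEm, rpow_add hKpos, rpow_add hc, rpow_one, rpow_one]
  -- rewrite the bound
  have hrhs : (p - 2) / (p - 1 + q) * ((1 + q) / (p - 1 + q)) ^ m * a ^ E / c ^ m
      = (p - 2) / (p - 1 + q) * K * c * t ^ (p - 1 + q) := by
    have hinv : (1 + q) / (p - 1 + q) = K⁻¹ := by
      rw [hK]; field_simp
    rw [hinv, haE, inv_rpow hKpos.le]
    have hKm : (0:ℝ) < K ^ m := rpow_pos_of_pos hKpos m
    have hcm : (0:ℝ) < c ^ m := rpow_pos_of_pos hc m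
    field_simp
  rw [hrhs] at hb'
  -- hb' : b < (p-2)/(p-1+q) * K * c * t^(p-1+q)
  have hbf : b = (p - 2) / (p - 1 + q) * K * c * t ^ (p - 1 + q) := by
    rw [hK]
    field_simp
    linarith [hb_eq]
  rw [hbf] at hb'
  exact lt_irrefl _ hb'
end
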